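/- arXiv:2602.05621 — 2 statements merged into one kernel-verified Lean document; each statement's English description precedes it below -/
import Mathlib

section
/- Let Ω ⊂ ℝ be an open bounded interval and let ω : (0,∞) → (0,∞) be nondecreasing. Then for all p ≥ 1 and each η > 0 there exists C(p,η) > 0 such that ∫_Ω |φ_x|^{2p+2} dx ≤ η ∫_Ω |φ_x|^{2p−2} φ_xx² dx + C(p,η)·‖φ‖_{L^∞(Ω)}^{2p+2} holds for all φ ∈ S_ω, where S_ω is the set of all φ̃ ∈ C²(Ω̄) with ∂φ̃/∂ν = 0 on ∂Ω and such that for all η' > 0 one has |φ̃(x) − φ̃(y)| < η' whenever x, y ∈ Ω̄ satisfy |x − y| < ω(η'). -/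
open Set MeasureTheory

noncomputable section

/-- algebra: `a * (|a|^q * a) = |a|^(q+2)` for `q > 0`. -/
lemma aux_mul_self (q : ℝ) (hq : 0 < q) (a : ℝ) : a * (|a| ^ q * a) = |a| ^ (q + 2) := by
  rcases eq_or_ne a 0 with rfl | ha
  · simp [Real.zero_rpow (by positivity : q + 2 ≠ 0)]
  · have h0 : 0 < |a| := abs_pos.mpr ha
    have : |a| ^ (q + 2) = |a| ^ q * |a| ^ (2:ℝ) := by
      rw [← Real.rpow_add h0]
    rw [this]
    have h2 : |a| ^ (2:ℝ) = a ^ 2 := by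
      rw [show (2:ℝ) = ((2:ℕ):ℝ) by norm_num, Real.rpow_natCast, sq_abs]
    rw [h2]; ring

/-- algebra: `| |a|^q * a | = |a|^(q+1)`. -/
lemma aux_abs_w (q : ℝ) (hq : 0 < q) (a : ℝ) : |(|a| ^ q * a)| = |a| ^ (q + 1) := by
  rcases eq_or_ne a 0 with rfl | ha
  · simp [Real.zero_rpow (by positivity : q + 1 ≠ 0)]
  · have h0 : 0 < |a| := abs_pos.mpr ha
    have e : |a| ^ (q+1) = |a| ^ q * |a| := by
      rw [Real.rpow_add h0, Real.rpow_one]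
    rw [abs_mul, abs_of_nonneg (Real.rpow_nonneg (abs_nonneg a) q), e]

/-- Young's inequality, weighted form. -/
lemma aux_young1 (p t a b : ℝ) (hp : 1 ≤ p) (ht : 0 < t) :
    |a| ^ (2*p) * |b| ≤ t/2 * (|a| ^ (2*p-2) * b^2) + 1/(2*t) * |a| ^ (2*p+2) := by
  rcases eq_or_ne a 0 with rfl | ha
  · have : |(0:ℝ)| ^ (2*p) = 0 := by
      simp [Real.zero_rpow (by positivity : 2*p ≠ 0)]
    rw [this]; simp only [zero_mul]
    have h1 : (0:ℝ) ≤ |(0:ℝ)| ^ (2*p-2) * b^2 := by positivity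
    have h2 : (0:ℝ) ≤ |(0:ℝ)| ^ (2*p+2) := by positivity
    positivity
  · have h0 : 0 < |a| := abs_pos.mpr ha
    have e1 : |a| ^ (2*p) = |a| ^ (p-1) * |a| ^ (p+1) := by
      rw [← Real.rpow_add h0]; ring_nf
    have e2 : |a| ^ (2*p-2) = (|a| ^ (p-1))^2 := by
      rw [sq, ← Real.rpow_add h0]; ring_nf
    have e3 : |a| ^ (2*p+2) = (|a| ^ (p+1))^2 := by
      rw [sq, ← Real.rpow_add h0]; ring_nf
    rw [e1, e2, e3]
    set x := |a| ^ (p-1) with hx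
    set y := |a| ^ (p+1) with hy
    have hxn : 0 ≤ x := Real.rpow_nonneg (abs_nonneg a) _
    have hyn : 0 ≤ y := Real.rpow_nonneg (abs_nonneg a) _
    have hb : b^2 = |b|^2 := (sq_abs b).symm
    rw [hb]
    have h2t : (0:ℝ) < 2*t := by linarith
    have key : t/2 * (x^2 * |b|^2) + 1/(2*t) * y^2 - x * y * |b| =
        (t*(x*|b|) - y)^2 / (2*t) := by
      field_simp; ring
    have h3 : (0:ℝ) ≤ (t*(x*|b|) - y)^2 / (2*t) := div_nonneg (sq_nonneg _) h2t.le
    linarith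

/-- Young-type: absorb `K * A^(q+1)` into `(1/4) A^(q+2)` plus a constant. -/
lemma aux_young2 (q K A : ℝ) (hq : 0 < q) (hK : 0 ≤ K) (hA : 0 ≤ A) :
    K * A ^ (q+1) ≤ (1/4) * A ^ (q+2) + K * (4*K) ^ (q+1) := by
  rcases le_or_gt A (4*K) with h | h
  · have h1 : A ^ (q+1) ≤ (4*K) ^ (q+1) := Real.rpow_le_rpow hA h (by positivity)
    have h2 : (0:ℝ) ≤ A ^ (q+2) := Real.rpow_nonneg hA _
    nlinarith
  · have hA0 : 0 < A := lt_of_le_of_lt (by positivity) h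
    have e : A ^ (q+2) = A ^ (q+1) * A := by
      rw [show q+2 = (q+1)+1 by ring, Real.rpow_add hA0, Real.rpow_one]
    have h1 : 0 ≤ A ^ (q+1) := Real.rpow_nonneg hA _
    have h2 : 0 ≤ K * (4*K) ^ (q+1) := mul_nonneg hK (Real.rpow_nonneg (by positivity) _)
    nlinarith

/-- derivative of `z ↦ |z|^q * z`. -/
lemma aux_hasDerivAt (q : ℝ) (hq : 1 ≤ q) (y : ℝ) :
    HasDerivAt (fun z : ℝ => |z| ^ q * z) ((q+1) * |y| ^ q) y := by
  rcases lt_trichotomy y 0 with hy | rfl | hy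
  · have hne : -y > 0 := by linarith
    have h1 : HasDerivAt (fun w : ℝ => w ^ (q+1)) ((q+1) * (-y) ^ q) (-y) := by
      have := Real.hasDerivAt_rpow_const (x := -y) (p := q+1) (Or.inl hne.ne')
      simpa using this.congr_deriv (by ring_nf)
    have h2 : HasDerivAt (fun z : ℝ => (-z) ^ (q+1)) ((q+1) * (-y) ^ q * (-1)) y :=
      h1.comp y (hasDerivAt_neg y)
    have h3 : HasDerivAt (fun z : ℝ => -((-z) ^ (q+1))) ((q+1) * (-y) ^ q) y := by
      exact h2.neg.congr_deriv (by ring)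
    have heq : (fun z : ℝ => |z| ^ q * z) =ᶠ[nhds y] (fun z : ℝ => -((-z) ^ (q+1))) := by
      filter_upwards [IsOpen.mem_nhds isOpen_Iio hy] with z hz
      have hz0 : (0:ℝ) < -z := by simpa using hz
      have : |z| = -z := abs_of_neg hz
      rw [this, show (-z) ^ (q+1) = (-z) ^ q * (-z) ^ (1:ℝ) by rw [← Real.rpow_add hz0],
        Real.rpow_one]
      ring
    have := h3.congr_of_eventuallyEq heq
    simpa [abs_of_neg hy] using this
  · rw [hasDerivAt_iff_tendsto_slope]
    have habs : Filter.Tendsto (fun z : ℝ => |z| ^ q) (nhdsWithin 0 {(0:ℝ)}ᶜ) (nhds 0) := by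
      have h1 : ContinuousAt (fun x : ℝ => x ^ q) 0 :=
        Real.continuousAt_rpow_const 0 q (Or.inr (by linarith))
      have h1' : ContinuousAt (fun x : ℝ => x ^ q) (|(0:ℝ)|) := by simpa using h1
      have h2 : ContinuousAt (fun z : ℝ => |z| ^ q) 0 := h1'.comp continuous_abs.continuousAt
      have := h2.continuousWithinAt (s := {(0:ℝ)}ᶜ)
      simpa [ContinuousWithinAt, Real.zero_rpow (by linarith : q ≠ 0)] using this
    have : ∀ᶠ z in nhdsWithin 0 {(0:ℝ)}ᶜ,
        |z| ^ q = slope (fun z : ℝ => |z| ^ q * z) 0 z := by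
      filter_upwards [self_mem_nhdsWithin] with z hz
      have hz0 : z ≠ 0 := hz
      simp [slope, hz0, Real.zero_rpow (by linarith : q ≠ 0)]
      field_simp
    have h0 : |(0:ℝ)| ^ q = 0 := by simp [Real.zero_rpow (by linarith : q ≠ 0)]
    rw [show (q+1) * |(0:ℝ)| ^ q = 0 by rw [h0]; ring]
    exact habs.congr' this
  · have h1 : HasDerivAt (fun w : ℝ => w ^ (q+1)) ((q+1) * y ^ q) y := by
      have := Real.hasDerivAt_rpow_const (x := y) (p := q+1) (Or.inl hy.ne')
      simpa using this.congr_deriv (by ring_nf)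
    have heq : (fun z : ℝ => |z| ^ q * z) =ᶠ[nhds y] (fun z : ℝ => z ^ (q+1)) := by
      filter_upwards [IsOpen.mem_nhds isOpen_Ioi hy] with z hz
      have hz0 : (0:ℝ) < z := hz
      rw [abs_of_pos hz0, show z ^ (q+1) = z ^ q * z ^ (1:ℝ) by rw [← Real.rpow_add hz0],
        Real.rpow_one]
    have := h1.congr_of_eventuallyEq heq
    simpa [abs_of_pos hy] using this


set_option maxHeartbeats 2000000 in

/-- **Lemma 2.4 (Ehrling-type inequality).** Let `Ω = (l,r)` be an open bounded interval
and let `ω : (0,∞) → (0,∞)` be nondecreasing. Then for all `p ≥ 1` and each `η > 0` there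
exists `C(p,η) > 0` such that
`∫_Ω |φ'|^{2p+2} ≤ η ∫_Ω |φ'|^{2p−2} (φ'')² + C(p,η) ‖φ‖_{L^∞(Ω)}^{2p+2}`
holds for all `φ ∈ S_ω`, i.e. all `φ ∈ C²(Ω̄)` with `φ' = 0` on `∂Ω` which admit `ω` as a
modulus of continuity: for all `η' > 0`, `|φ(x) − φ(y)| < η'` whenever `x, y ∈ Ω̄` satisfy
`|x − y| < ω(η')`. -/
theorem ehrling_type_inequality
    (l r : ℝ) (hlr : l < r) (ω : ℝ → ℝ)
    (hωpos : ∀ s : ℝ, 0 < s → 0 < ω s)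
    (hωmono : ∀ s₁ s₂ : ℝ, 0 < s₁ → s₁ ≤ s₂ → ω s₁ ≤ ω s₂)
    (p : ℝ) (hp : 1 ≤ p) (η : ℝ) (hη : 0 < η) :
    ∃ C > (0:ℝ), ∀ φ : ℝ → ℝ,
      -- `φ ∈ C²(Ω̄)`
      (∀ x ∈ Icc l r, DifferentiableAt ℝ φ x ∧ DifferentiableAt ℝ (deriv φ) x) →
      ContinuousOn (deriv (deriv φ)) (Icc l r) →
      -- `∂φ/∂ν = 0` on `∂Ω`
      deriv φ l = 0 → deriv φ r = 0 →
      -- `ω` is a modulus of continuity of `φ`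
      (∀ η' : ℝ, 0 < η' → ∀ x ∈ Icc l r, ∀ y ∈ Icc l r, |x - y| < ω η' → |φ x - φ y| < η') →
      (∫ x in Ioo l r, |deriv φ x| ^ (2 * p + 2)) ≤
        η * (∫ x in Ioo l r, |deriv φ x| ^ (2 * p - 2) * (deriv (deriv φ) x) ^ 2) +
          C * (sSup ((fun x => |φ x|) '' Icc l r)) ^ (2 * p + 2) := by
  -- ## Constants
  have h2p1 : (0:ℝ) < 2*p+1 := by linarith
  set δ := Real.sqrt η / (4*(2*p+1)) with hδdef
  have hδ : 0 < δ := div_pos (Real.sqrt_pos.mpr hη) (by linarith)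
  have hsq : Real.sqrt η * Real.sqrt η = η := Real.mul_self_sqrt hη.le
  have hδmul : δ * (4*(2*p+1)) = Real.sqrt η := by
    rw [hδdef]; field_simp
  have hδη : 16*((2*p+1)*(2*p+1))*(δ*δ) = η := by
    calc 16*((2*p+1)*(2*p+1))*(δ*δ) = (δ*(4*(2*p+1))) * (δ*(4*(2*p+1))) := by ring
    _ = Real.sqrt η * Real.sqrt η := by rw [hδmul]
    _ = η := hsq
  have hωδ : 0 < ω δ := hωpos δ hδ
  set N : ℕ := ⌈(r - l)/(ω δ)⌉₊ + 1 with hNdef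
  have hNpos : 0 < N := Nat.succ_pos _
  have hNne : ((N:ℝ)) ≠ 0 := Nat.cast_ne_zero.mpr hNpos.ne'
  have hNR : (0:ℝ) < N := Nat.cast_pos.mpr hNpos
  set h : ℝ := (r - l)/(N:ℝ) with hhdef
  have hh0 : 0 < h := div_pos (by linarith) hNR
  have hhω : h < ω δ := by
    have h1 : (r - l)/(ω δ) ≤ (⌈(r - l)/(ω δ)⌉₊ : ℝ) := Nat.le_ceil _
    have h2 : ((⌈(r - l)/(ω δ)⌉₊ : ℝ)) < (N:ℝ) := by
      rw [hNdef]; push_cast; linarith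
    have h3 : (r - l)/(ω δ) < (N:ℝ) := lt_of_le_of_lt h1 h2
    rw [hhdef, div_lt_iff₀ hNR]
    calc r - l = ((r-l)/(ω δ)) * (ω δ) := by field_simp
    _ < (N:ℝ) * (ω δ) := mul_lt_mul_of_pos_right h3 hωδ
    _ = ω δ * N := by ring
  -- grid
  set a : ℕ → ℝ := fun i => l + i * h with hadef
  have ha0 : a 0 = l := by simp [hadef]
  have haN : a N = r := by
    rw [hadef]; simp only []
    rw [hhdef]; field_simp
    ring
  have hstep : ∀ i : ℕ, a (i+1) = a i + h := by
    intro i; rw [hadef]; push_cast; ring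
  have hmemgrid : ∀ i : ℕ, i ≤ N → a i ∈ Icc l r := by
    intro i hi
    constructor
    · rw [hadef]
      have : (0:ℝ) ≤ i * h := mul_nonneg (Nat.cast_nonneg i) hh0.le
      simp only []; linarith
    · rw [hadef]; simp only []
      have h1 : (i:ℝ) * h ≤ (N:ℝ) * h :=
        mul_le_mul_of_nonneg_right (Nat.cast_le.mpr hi) hh0.le
      have h2 : (N:ℝ) * h = r - l := by rw [hhdef]; field_simp
      linarith
  -- other constants
  set K₂ : ℝ := (δ/h)*(4*(δ/h))^(2*p+1) with hK₂def
  have hK₂ : 0 < K₂ := by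
    have h1 : 0 < δ/h := div_pos hδ hh0
    have h2 : (0:ℝ) < (4*(δ/h))^(2*p+1) := Real.rpow_pos_of_pos (by linarith) _
    exact mul_pos h1 h2
  set Kc : ℝ := 2*K₂*(r-l) with hKcdef
  have hKc : 0 < Kc := by
    have : (0:ℝ) < r - l := by linarith
    positivity
  have hδpow : (0:ℝ) < δ ^ (2*p+2) := Real.rpow_pos_of_pos hδ _
  refine ⟨1 + Kc / δ ^ (2*p+2), by positivity, ?_⟩
  intro φ hC2 hvc hul hur hmod
  set u := deriv φ with hu
  set v := deriv u with hv
  have h2ple : (1:ℝ) ≤ 2*p := by linarith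
  have h2ppos : (0:ℝ) < 2*p := by linarith
  have hφd : ∀ x ∈ Icc l r, HasDerivAt φ (u x) x := fun x hx => (hC2 x hx).1.hasDerivAt
  have hud : ∀ x ∈ Icc l r, HasDerivAt u (v x) x := fun x hx => (hC2 x hx).2.hasDerivAt
  have hφc : ContinuousOn φ (Icc l r) := fun x hx => (hC2 x hx).1.continuousAt.continuousWithinAt
  have huc : ContinuousOn u (Icc l r) := fun x hx => (hC2 x hx).2.continuousAt.continuousWithinAt
  have habs : ∀ e : ℝ, 0 ≤ e → ContinuousOn (fun x => |u x| ^ e) (Icc l r) :=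
    fun e he => huc.abs.rpow_const (fun x _ => Or.inr he)
  have hlmem : l ∈ Icc l r := left_mem_Icc.mpr hlr.le
  have hrmem : r ∈ Icc l r := right_mem_Icc.mpr hlr.le
  have hint : ∀ (f : ℝ → ℝ), ContinuousOn f (Icc l r) → ∀ A B : ℝ, A ∈ Icc l r → B ∈ Icc l r →
      IntervalIntegrable f volume A B :=
    fun f hf A B hA hB => (hf.mono (uIcc_subset_Icc hA hB)).intervalIntegrable
  -- continuity of all integrands
  have hYc : ContinuousOn (fun x => |u x| ^ (2*p+2)) (Icc l r) := habs (2*p+2) (by linarith)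
  have hX2c : ContinuousOn (fun x => |u x| ^ (2*p-2) * (v x)^2) (Icc l r) :=
    (habs (2*p-2) (by linarith)).mul (hvc.pow 2)
  have hWc : ContinuousOn (fun x => |u x| ^ (2*p) * u x) (Icc l r) :=
    (habs (2*p) (by linarith)).mul huc
  have hVpc : ContinuousOn (fun x => (2*p+1) * (|u x| ^ (2*p) * v x)) (Icc l r) :=
    continuousOn_const.mul ((habs (2*p) (by linarith)).mul hvc)
  have hSc : ContinuousOn (fun x => |u x| ^ (2*p) * |v x|) (Icc l r) :=
    (habs (2*p) (by linarith)).mul hvc.abs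
  have hAc : ContinuousOn (fun x => |u x| ^ (2*p+1)) (Icc l r) := habs (2*p+1) (by linarith)
  have hf0c : ContinuousOn (fun x => u x * (|u x| ^ (2*p) * u x)) (Icc l r) := huc.mul hWc
  have hWd : ∀ x ∈ Icc l r, HasDerivAt (fun y => |u y| ^ (2*p) * u y)
      ((2*p+1) * (|u x| ^ (2*p) * v x)) x := by
    intro x hx
    have h1 := (aux_hasDerivAt (2*p) h2ple (u x)).comp x (hud x hx)
    exact h1.congr_deriv (by ring)
  -- sup norm
  set M := sSup ((fun x => |φ x|) '' Icc l r) with hMdef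
  have hMbdd : BddAbove ((fun x => |φ x|) '' Icc l r) :=
    (isCompact_Icc.image_of_continuousOn hφc.abs).bddAbove
  have hMle : ∀ x ∈ Icc l r, |φ x| ≤ M := fun x hx => le_csSup hMbdd ⟨x, hx, rfl⟩
  have hM0 : 0 ≤ M := le_trans (abs_nonneg (φ l)) (hMle l hlmem)
  have hMpow : 0 ≤ M ^ (2*p+2) := Real.rpow_nonneg hM0 _
  -- convert to interval integrals
  have hio : ∀ f : ℝ → ℝ, (∫ x in Ioo l r, f x) = ∫ x in l..r, f x := fun f => by
    rw [intervalIntegral.integral_of_le hlr.le, integral_Ioc_eq_integral_Ioo]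
  rw [hio, hio]
  set I' := ∫ x in l..r, |u x| ^ (2*p+2) with hI'def
  set J' := ∫ x in l..r, |u x| ^ (2*p-2) * (v x)^2 with hJ'def
  have hJ'0 : 0 ≤ J' := by
    rw [hJ'def]
    apply intervalIntegral.integral_nonneg hlr.le
    intro x hx
    positivity
  have hI'f0 : I' = ∫ x in l..r, u x * (|u x| ^ (2*p) * u x) := by
    rw [hI'def]
    apply intervalIntegral.integral_congr
    intro x hx
    exact (aux_mul_self (2*p) h2ppos (u x)).symm
  by_cases hMδ : M ≤ δ
  · -- CASE 1 : M ≤ δ, use global integration by parts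
    have hibp := intervalIntegral.integral_mul_deriv_eq_deriv_mul
      (u := φ) (v := fun y => |u y| ^ (2*p) * u y) (u' := u)
      (v' := fun x => (2*p+1) * (|u x| ^ (2*p) * v x))
      (fun x hx => hφd x (by rwa [uIcc_of_le hlr.le] at hx))
      (fun x hx => hWd x (by rwa [uIcc_of_le hlr.le] at hx))
      (hint u huc l r hlmem hrmem)
      (hint _ hVpc l r hlmem hrmem)
    have hWr0 : |u r| ^ (2*p) * u r = 0 := by rw [hur]; ring
    have hWl0 : |u l| ^ (2*p) * u l = 0 := by rw [hul]; ring
    rw [hWr0, hWl0, mul_zero, mul_zero] at hibp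
    have hkey : I' = - ∫ x in l..r, φ x * ((2*p+1) * (|u x| ^ (2*p) * v x)) := by
      rw [hI'f0]; linarith [hibp]
    set t₁ : ℝ := 2*(2*p+1)*δ with ht₁def
    have ht₁ : 0 < t₁ := by positivity
    have hpt : ∀ x ∈ Icc l r, |φ x * ((2*p+1) * (|u x| ^ (2*p) * v x))|
        ≤ η/4 * (|u x| ^ (2*p-2) * (v x)^2) + 1/4 * (|u x| ^ (2*p+2)) := by
      intro x hx
      have hy := aux_young1 p t₁ (u x) (v x) hp ht₁
      have hS0 : 0 ≤ |u x| ^ (2*p) * |v x| :=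
        mul_nonneg (Real.rpow_nonneg (abs_nonneg _) _) (abs_nonneg _)
      have hX0 : 0 ≤ |u x| ^ (2*p-2) * (v x)^2 :=
        mul_nonneg (Real.rpow_nonneg (abs_nonneg _) _) (sq_nonneg _)
      have hY0 : 0 ≤ |u x| ^ (2*p+2) := Real.rpow_nonneg (abs_nonneg _) _
      have habsval : |φ x * ((2*p+1) * (|u x| ^ (2*p) * v x))|
          = |φ x| * ((2*p+1) * (|u x| ^ (2*p) * |v x|)) := by
        rw [abs_mul, abs_mul, abs_mul, abs_of_pos h2p1,
          abs_of_nonneg (Real.rpow_nonneg (abs_nonneg _) _)]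
      rw [habsval]
      have h1 : |φ x| * ((2*p+1) * (|u x| ^ (2*p) * |v x|))
          ≤ δ * ((2*p+1) * (|u x| ^ (2*p) * |v x|)) :=
        mul_le_mul_of_nonneg_right (le_trans (hMle x hx) hMδ) (by positivity)
      have h2 := mul_le_mul_of_nonneg_left hy (by positivity : (0:ℝ) ≤ δ*(2*p+1))
      have hc1 : δ*(2*p+1) * (t₁/2) = η/16 := by
        rw [ht₁def]; linear_combination hδη/16
      have hc2 : δ*(2*p+1) * (1/(2*t₁)) = 1/4 := by rw [ht₁def]; field_simp; ring
      have h4 : δ*(2*p+1)*(t₁/2) * (|u x| ^ (2*p-2) * (v x)^2)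
          = η/16 * (|u x| ^ (2*p-2) * (v x)^2) := by rw [hc1]
      have h4' : η/16 * (|u x| ^ (2*p-2) * (v x)^2) ≤ η/4 * (|u x| ^ (2*p-2) * (v x)^2) :=
        mul_le_mul_of_nonneg_right (by linarith : η/16 ≤ η/4) hX0
      have h5 : δ*(2*p+1)*(1/(2*t₁)) * (|u x| ^ (2*p+2)) = 1/4 * (|u x| ^ (2*p+2)) := by
        rw [hc2]
      linarith [h1, h2, h4, h4', h5]
    have hmono1 : I' ≤ η/4 * J' + 1/4 * I' := by
      have c1 : -(∫ x in l..r, φ x * ((2*p+1) * (|u x| ^ (2*p) * v x)))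
          ≤ |∫ x in l..r, φ x * ((2*p+1) * (|u x| ^ (2*p) * v x))| := neg_le_abs _
      have c2 : |∫ x in l..r, φ x * ((2*p+1) * (|u x| ^ (2*p) * v x))|
          ≤ ∫ x in l..r, |φ x * ((2*p+1) * (|u x| ^ (2*p) * v x))| :=
        intervalIntegral.abs_integral_le_integral_abs hlr.le
      have c3 : (∫ x in l..r, |φ x * ((2*p+1) * (|u x| ^ (2*p) * v x))|)
          ≤ ∫ x in l..r, (η/4 * (|u x| ^ (2*p-2) * (v x)^2) + 1/4 * (|u x| ^ (2*p+2))) :=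
        intervalIntegral.integral_mono_on hlr.le
          ((hint _ (hφc.mul hVpc) l r hlmem hrmem).abs)
          (hint _ ((continuousOn_const.mul hX2c).add (continuousOn_const.mul hYc)) l r hlmem hrmem)
          hpt
      have c4 : (∫ x in l..r, (η/4 * (|u x| ^ (2*p-2) * (v x)^2) + 1/4 * (|u x| ^ (2*p+2))))
          = η/4 * J' + 1/4 * I' := by
        rw [intervalIntegral.integral_add
            ((hint _ hX2c l r hlmem hrmem).const_mul (η/4))
            ((hint _ hYc l r hlmem hrmem).const_mul (1/4)),
          intervalIntegral.integral_const_mul, intervalIntegral.integral_const_mul,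
          hI'def, hJ'def]
      linarith [hkey]
    have hC0 : (0:ℝ) ≤ (1 + Kc / δ ^ (2*p+2)) * M ^ (2*p+2) := by positivity
    have hmul : η/4 * J' ≤ η * J' := mul_le_mul_of_nonneg_right (by linarith : η/4 ≤ η) hJ'0
    linarith [hJ'0, hmul]
  · -- CASE 2 : δ < M, partition into small intervals
    push_neg at hMδ
    have hδh : 0 < δ/h := div_pos hδ hh0
    have hf0int : ∀ k, k < N → IntervalIntegrable
        (fun x => u x * (|u x| ^ (2*p) * u x)) volume (a k) (a (k+1)) :=
      fun k hk => hint _ hf0c _ _ (hmemgrid k hk.le) (hmemgrid (k+1) hk)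
    have hFc : ContinuousOn (fun x => 2*δ*(2*p+1) * (|u x| ^ (2*p) * |v x|)
        + (δ/h) * (|u x| ^ (2*p+1))) (Icc l r) :=
      (continuousOn_const.mul hSc).add (continuousOn_const.mul hAc)
    have hFint : ∀ k, k < N → IntervalIntegrable
        (fun x => 2*δ*(2*p+1) * (|u x| ^ (2*p) * |v x|) + (δ/h) * (|u x| ^ (2*p+1)))
        volume (a k) (a (k+1)) :=
      fun k hk => hint _ hFc _ _ (hmemgrid k hk.le) (hmemgrid (k+1) hk)
    have key : ∀ k, k < N → (∫ x in a k..a (k+1), u x * (|u x| ^ (2*p) * u x))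
        ≤ ∫ x in a k..a (k+1), (2*δ*(2*p+1) * (|u x| ^ (2*p) * |v x|)
            + (δ/h) * (|u x| ^ (2*p+1))) := by
      intro k hk
      set A := a k with hAdef
      set B := a (k+1) with hBdef
      have hA : A ∈ Icc l r := hmemgrid k hk.le
      have hB : B ∈ Icc l r := hmemgrid (k+1) hk
      have hBA : B = A + h := hstep k
      have hAB : A ≤ B := by rw [hBA]; linarith
      have huI : uIcc A B = Icc A B := uIcc_of_le hAB
      have hsub2 : Icc A B ⊆ Icc l r := Icc_subset_Icc hA.1 hB.2
      have hsubu : uIcc A B ⊆ Icc l r := by rw [huI]; exact hsub2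
      set s := (φ B - φ A)/h with hsdef
      have hφBA : |φ B - φ A| ≤ δ := by
        apply le_of_lt
        apply hmod δ hδ B hB A hA
        rw [show B - A = h by rw [hBA]; ring, abs_of_pos hh0]
        exact hhω
      have hsabs : |s| ≤ δ/h := by
        rw [hsdef, abs_div, abs_of_pos hh0]
        gcongr
      have hUd : ∀ x ∈ uIcc A B, HasDerivAt (fun y => φ y - (φ A + s*(y - A))) (u x - s) x := by
        intro x hx
        have h1 := hφd x (hsubu hx)
        have h2 : HasDerivAt (fun y : ℝ => φ A + s*(y - A)) s x := by
          have := (((hasDerivAt_id x).sub_const A).const_mul s).const_add (φ A)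
          simpa using this
        exact h1.sub h2
      have hWd2 : ∀ x ∈ uIcc A B, HasDerivAt (fun y => |u y| ^ (2*p) * u y)
          ((2*p+1) * (|u x| ^ (2*p) * v x)) x := fun x hx => hWd x (hsubu hx)
      have husint : IntervalIntegrable (fun x => u x - s) volume A B :=
        hint _ (huc.sub continuousOn_const) A B hA hB
      have hVint : IntervalIntegrable (fun x => (2*p+1) * (|u x| ^ (2*p) * v x)) volume A B :=
        hint _ hVpc A B hA hB
      have hibp2 := intervalIntegral.integral_mul_deriv_eq_deriv_mul hUd hWd2 husint hVint
      have hUB : φ B - (φ A + s*(B - A)) = 0 := by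
        rw [hsdef, hBA]; field_simp
        ring
      have hUA : φ A - (φ A + s*(A - A)) = 0 := by ring
      rw [hUB, hUA, zero_mul, zero_mul] at hibp2
      have hIBP : (∫ x in A..B, (u x - s) * (|u x| ^ (2*p) * u x))
          = - ∫ x in A..B, (φ x - (φ A + s*(x - A))) * ((2*p+1) * (|u x| ^ (2*p) * v x)) := by
        linarith [hibp2]
      have hWint : IntervalIntegrable (fun x => |u x| ^ (2*p) * u x) volume A B :=
        hint _ hWc A B hA hB
      have husWint : IntervalIntegrable (fun x => (u x - s) * (|u x| ^ (2*p) * u x)) volume A B :=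
        hint _ ((huc.sub continuousOn_const).mul hWc) A B hA hB
      have hsplit : (∫ x in A..B, u x * (|u x| ^ (2*p) * u x))
          = (∫ x in A..B, (u x - s) * (|u x| ^ (2*p) * u x))
            + s * ∫ x in A..B, (|u x| ^ (2*p) * u x) := by
        rw [← intervalIntegral.integral_const_mul,
          ← intervalIntegral.integral_add husWint (hWint.const_mul s)]
        apply intervalIntegral.integral_congr
        intro x hx
        simp only []
        ring
      have hpt2 : ∀ x ∈ Icc A B, |(φ x - (φ A + s*(x - A))) * ((2*p+1) * (|u x| ^ (2*p) * v x))|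
          ≤ 2*δ*(2*p+1) * (|u x| ^ (2*p) * |v x|) := by
        intro x hx
        have hxlr : x ∈ Icc l r := hsub2 hx
        have hxA0 : (0:ℝ) ≤ x - A := by linarith [hx.1]
        have hxAh : x - A ≤ h := by have := hx.2; rw [hBA] at this; linarith
        have hφxA : |φ x - φ A| ≤ δ := by
          apply le_of_lt
          apply hmod δ hδ x hxlr A hA
          rw [abs_of_nonneg hxA0]
          linarith [hhω]
        have hsx : |s*(x - A)| ≤ δ := by
          rw [abs_mul]
          calc |s| * |x - A| ≤ (δ/h) * h := by
                apply mul_le_mul hsabs _ (abs_nonneg _) hδh.le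
                rw [abs_of_nonneg hxA0]; exact hxAh
          _ = δ := by field_simp
        have hU2δ : |φ x - (φ A + s*(x - A))| ≤ 2*δ := by
          have h5 : φ x - (φ A + s*(x - A)) = (φ x - φ A) - s*(x - A) := by ring
          rw [h5]
          calc |(φ x - φ A) - s*(x - A)| ≤ |φ x - φ A| + |s*(x - A)| := abs_sub _ _
          _ ≤ 2*δ := by linarith
        rw [abs_mul, abs_mul, abs_of_pos h2p1, abs_mul,
          abs_of_nonneg (Real.rpow_nonneg (abs_nonneg _) _)]
        calc |φ x - (φ A + s*(x - A))| * ((2*p+1) * (|u x| ^ (2*p) * |v x|))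
            ≤ (2*δ) * ((2*p+1) * (|u x| ^ (2*p) * |v x|)) :=
              mul_le_mul_of_nonneg_right hU2δ (by positivity)
        _ = 2*δ*(2*p+1) * (|u x| ^ (2*p) * |v x|) := by ring
      have hp1 : (∫ x in A..B, (u x - s) * (|u x| ^ (2*p) * u x))
          ≤ ∫ x in A..B, 2*δ*(2*p+1) * (|u x| ^ (2*p) * |v x|) := by
        rw [hIBP]
        have c1 := neg_le_abs (∫ x in A..B, (φ x - (φ A + s*(x - A))) * ((2*p+1) * (|u x| ^ (2*p) * v x)))
        have c2 : |∫ x in A..B, (φ x - (φ A + s*(x - A))) * ((2*p+1) * (|u x| ^ (2*p) * v x))|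
            ≤ ∫ x in A..B, |(φ x - (φ A + s*(x - A))) * ((2*p+1) * (|u x| ^ (2*p) * v x))| :=
          intervalIntegral.abs_integral_le_integral_abs hAB
        have c3 : (∫ x in A..B, |(φ x - (φ A + s*(x - A))) * ((2*p+1) * (|u x| ^ (2*p) * v x))|)
            ≤ ∫ x in A..B, 2*δ*(2*p+1) * (|u x| ^ (2*p) * |v x|) := by
          have hUc : ContinuousOn (fun x => φ x - (φ A + s*(x - A))) (Icc l r) :=
            hφc.sub (continuousOn_const.add
              (continuousOn_const.mul (continuousOn_id.sub continuousOn_const)))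
          apply intervalIntegral.integral_mono_on hAB
          · exact (hint _ (hUc.mul hVpc) A B hA hB).abs
          · exact hint _ (continuousOn_const.mul hSc) A B hA hB
          · exact hpt2
        linarith
      have habsW : (∫ x in A..B, |(|u x| ^ (2*p) * u x)|) = ∫ x in A..B, |u x| ^ (2*p+1) := by
        apply intervalIntegral.integral_congr
        intro x hx
        exact aux_abs_w (2*p) h2ppos (u x)
      have hp2 : s * (∫ x in A..B, (|u x| ^ (2*p) * u x))
          ≤ (δ/h) * ∫ x in A..B, |u x| ^ (2*p+1) := by
        calc s * (∫ x in A..B, (|u x| ^ (2*p) * u x))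
            ≤ |s * (∫ x in A..B, (|u x| ^ (2*p) * u x))| := le_abs_self _
        _ = |s| * |∫ x in A..B, (|u x| ^ (2*p) * u x)| := abs_mul _ _
        _ ≤ (δ/h) * (∫ x in A..B, |(|u x| ^ (2*p) * u x)|) := by
              apply mul_le_mul hsabs (intervalIntegral.abs_integral_le_integral_abs hAB)
                (abs_nonneg _) hδh.le
        _ = (δ/h) * ∫ x in A..B, |u x| ^ (2*p+1) := by rw [habsW]
      have hcomb : (∫ x in A..B, 2*δ*(2*p+1) * (|u x| ^ (2*p) * |v x|))
          + (δ/h) * (∫ x in A..B, |u x| ^ (2*p+1))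
          = ∫ x in A..B, (2*δ*(2*p+1) * (|u x| ^ (2*p) * |v x|) + (δ/h) * (|u x| ^ (2*p+1))) := by
        rw [← intervalIntegral.integral_const_mul,
          ← intervalIntegral.integral_add
            ((hint _ hSc A B hA hB).const_mul _)
            ((hint _ hAc A B hA hB).const_mul _)]
      linarith [hsplit, hp1, hp2, hcomb]
    have hsumf0 : ∑ k ∈ Finset.range N, (∫ x in a k..a (k+1), u x * (|u x| ^ (2*p) * u x))
        = ∫ x in l..r, u x * (|u x| ^ (2*p) * u x) := by
      rw [intervalIntegral.sum_integral_adjacent_intervals hf0int, ha0, haN]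
    have hsumF : ∑ k ∈ Finset.range N, (∫ x in a k..a (k+1),
          (2*δ*(2*p+1) * (|u x| ^ (2*p) * |v x|) + (δ/h) * (|u x| ^ (2*p+1))))
        = ∫ x in l..r, (2*δ*(2*p+1) * (|u x| ^ (2*p) * |v x|) + (δ/h) * (|u x| ^ (2*p+1))) := by
      rw [intervalIntegral.sum_integral_adjacent_intervals hFint, ha0, haN]
    have hIF : (∫ x in l..r, u x * (|u x| ^ (2*p) * u x))
        ≤ ∫ x in l..r, (2*δ*(2*p+1) * (|u x| ^ (2*p) * |v x|) + (δ/h) * (|u x| ^ (2*p+1))) := by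
      rw [← hsumf0, ← hsumF]
      exact Finset.sum_le_sum (fun k hk => key k (Finset.mem_range.mp hk))
    set t₂ : ℝ := 4*(2*p+1)*δ with ht₂def
    have ht₂ : 0 < t₂ := by positivity
    have hptFG : ∀ x ∈ Icc l r,
        2*δ*(2*p+1) * (|u x| ^ (2*p) * |v x|) + (δ/h) * (|u x| ^ (2*p+1))
        ≤ (η/4 * (|u x| ^ (2*p-2) * (v x)^2) + 1/2 * (|u x| ^ (2*p+2))) + K₂ := by
      intro x hx
      have hy := aux_young1 p t₂ (u x) (v x) hp ht₂
      have hy2 := aux_young2 (2*p) (δ/h) (|u x|) h2ppos hδh.le (abs_nonneg _)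
      have hX0 : 0 ≤ |u x| ^ (2*p-2) * (v x)^2 :=
        mul_nonneg (Real.rpow_nonneg (abs_nonneg _) _) (sq_nonneg _)
      have hY0 : 0 ≤ |u x| ^ (2*p+2) := Real.rpow_nonneg (abs_nonneg _) _
      have h1 := mul_le_mul_of_nonneg_left hy (by positivity : (0:ℝ) ≤ 2*δ*(2*p+1))
      have hc1 : 2*δ*(2*p+1) * (t₂/2) = η/4 := by
        rw [ht₂def]; linear_combination hδη/4
      have hc2 : 2*δ*(2*p+1) * (1/(2*t₂)) = 1/4 := by rw [ht₂def]; field_simp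
      have h4 : 2*δ*(2*p+1)*(t₂/2) * (|u x| ^ (2*p-2) * (v x)^2)
          = η/4 * (|u x| ^ (2*p-2) * (v x)^2) := by rw [hc1]
      have h6 : 2*δ*(2*p+1)*(1/(2*t₂)) * (|u x| ^ (2*p+2)) = 1/4 * (|u x| ^ (2*p+2)) := by
        rw [hc2]
      have h5 : (δ/h) * (|u x|) ^ (2*p+1) ≤ 1/4 * (|u x|) ^ (2*p+2) + K₂ := by
        rw [hK₂def]
        convert hy2 using 3 <;> ring
      linarith [h1, h4, h6, h5]
    have hGint1 : IntervalIntegrable (fun x => η/4 * (|u x| ^ (2*p-2) * (v x)^2)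
        + 1/2 * (|u x| ^ (2*p+2))) volume l r :=
      ((hint _ hX2c l r hlmem hrmem).const_mul _).add ((hint _ hYc l r hlmem hrmem).const_mul _)
    have hFG : (∫ x in l..r, (2*δ*(2*p+1) * (|u x| ^ (2*p) * |v x|) + (δ/h) * (|u x| ^ (2*p+1))))
        ≤ η/4 * J' + 1/2 * I' + K₂*(r-l) := by
      have c1 : (∫ x in l..r, (2*δ*(2*p+1) * (|u x| ^ (2*p) * |v x|) + (δ/h) * (|u x| ^ (2*p+1))))
          ≤ ∫ x in l..r, ((η/4 * (|u x| ^ (2*p-2) * (v x)^2) + 1/2 * (|u x| ^ (2*p+2))) + K₂) :=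
        intervalIntegral.integral_mono_on hlr.le
          (hint _ hFc l r hlmem hrmem)
          (hGint1.add intervalIntegrable_const)
          hptFG
      have c2 : (∫ x in l..r, ((η/4 * (|u x| ^ (2*p-2) * (v x)^2) + 1/2 * (|u x| ^ (2*p+2))) + K₂))
          = η/4 * J' + 1/2 * I' + K₂*(r-l) := by
        rw [intervalIntegral.integral_add hGint1 intervalIntegrable_const,
          intervalIntegral.integral_add
            ((hint _ hX2c l r hlmem hrmem).const_mul _)
            ((hint _ hYc l r hlmem hrmem).const_mul _),
          intervalIntegral.integral_const_mul, intervalIntegral.integral_const_mul,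
          intervalIntegral.integral_const, hI'def, hJ'def, smul_eq_mul]
        ring
      linarith
    have hfin1 : I' ≤ η/4 * J' + 1/2 * I' + K₂*(r-l) := by
      rw [hI'f0]
      linarith [hIF, hFG]
    have hfin2 : I' ≤ η * J' + Kc := by
      rw [hKcdef]
      have : η/4 * J' ≤ η * J' := mul_le_mul_of_nonneg_right (by linarith : η/4 ≤ η) hJ'0
      linarith
    have hKcM : Kc ≤ (1 + Kc / δ ^ (2*p+2)) * M ^ (2*p+2) := by
      have h1 : δ ^ (2*p+2) ≤ M ^ (2*p+2) := Real.rpow_le_rpow hδ.le hMδ.le (by linarith)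
      have h2 : Kc * δ ^ (2*p+2) ≤ Kc * M ^ (2*p+2) := mul_le_mul_of_nonneg_left h1 hKc.le
      have h4 : Kc = Kc * δ ^ (2*p+2) / δ ^ (2*p+2) := by field_simp
      calc Kc = Kc * δ ^ (2*p+2) / δ ^ (2*p+2) := h4
      _ ≤ Kc * M ^ (2*p+2) / δ ^ (2*p+2) := by gcongr
      _ = Kc / δ ^ (2*p+2) * M ^ (2*p+2) := by ring
      _ ≤ (1 + Kc / δ ^ (2*p+2)) * M ^ (2*p+2) := by
            have he : (1 + Kc / δ ^ (2*p+2)) * M ^ (2*p+2)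
                = M ^ (2*p+2) + Kc / δ ^ (2*p+2) * M ^ (2*p+2) := by ring
            linarith [hMpow]
    linarith [hfin2, hKcM]
end
end

section
/- Suppose Ω ⊂ ℝ is an open bounded interval, D > 0, the parameter functions a, γ, f satisfy the structural hypotheses, and (u, Θ) is a classical solution of (⋆) on Ω × (0,T_max) with Θ ≥ 0. Then with c_3 := (C_γ²D + 1)/D² and c_4 := C_f⁴, the differential inequality (1/2) d/dt ∫_Ω Θ_x² dx + (D/2) ∫_Ω Θ_xx² dx ≤ c_3 ∫_Ω u_tx⁴ dx + c_4 ∫_Ω (Θ+1)^{4α} dx holds for all t ∈ (0,T_max). -/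
open Set MeasureTheory
open scoped ENNReal

noncomputable section

/-- Partial derivative in the first (space) variable. -/
def pdx (w : ℝ → ℝ → ℝ) : ℝ → ℝ → ℝ := fun x t => deriv (fun y => w y t) x

/-- Partial derivative in the second (time) variable. -/
def pdt (w : ℝ → ℝ → ℝ) : ℝ → ℝ → ℝ := fun x t => deriv (fun s => w x s) t

/-- Membership in the Sobolev space `W^{k,2}((l,r))`, encoded via the classical
iterated derivatives being square-integrable on the interval. -/
def MemW (k : ℕ) (g : ℝ → ℝ) (l r : ℝ) : Prop :=
  ∀ j ≤ k, MeasureTheory.MemLp (iteratedDeriv j g) 2 (volume.restrict (Ioo l r))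

/-- `C^{2,1}` regularity (twice continuously differentiable in space, once in time)
of `w` on `Sx ×ˢ St`. -/
def C21On (w : ℝ → ℝ → ℝ) (Sx St : Set ℝ) : Prop :=
  (∀ x ∈ Sx, ∀ t ∈ St,
      DifferentiableAt ℝ (fun y => w y t) x ∧
      DifferentiableAt ℝ (fun y => pdx w y t) x ∧
      DifferentiableAt ℝ (fun s => w x s) t) ∧
  ContinuousOn (fun p : ℝ × ℝ => w p.1 p.2) (Sx ×ˢ St) ∧
  ContinuousOn (fun p : ℝ × ℝ => pdx w p.1 p.2) (Sx ×ˢ St) ∧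
  ContinuousOn (fun p : ℝ × ℝ => pdx (pdx w) p.1 p.2) (Sx ×ˢ St) ∧
  ContinuousOn (fun p : ℝ × ℝ => pdt w p.1 p.2) (Sx ×ˢ St)

/-- The open time interval `(0, Tmax)` for `Tmax ∈ (0,∞]`, as a set of reals. -/
def TJ (Tmax : ℝ≥0∞) : Set ℝ := {t : ℝ | 0 < t ∧ ENNReal.ofReal t < Tmax}

/-- Structural hypotheses on the parameter functions `γ`, `a`, `f`. -/
def StructHyp (l r : ℝ) (cγ Cγ Cf α : ℝ) (γ f : ℝ → ℝ) (a : ℝ → ℝ → ℝ) : Prop :=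
  0 < cγ ∧ cγ < 1 ∧ 1 < Cγ ∧ 1 < Cf ∧ 0 < α ∧ α < 5 / 6 ∧
  ContDiffOn ℝ 2 (fun p : ℝ × ℝ => a p.1 p.2) (Icc l r ×ˢ Ici 0) ∧
  (∀ x ∈ Icc l r, ∀ t : ℝ, 0 ≤ t → 0 < a x t) ∧
  ContDiffOn ℝ 2 γ (Ici 0) ∧
  ContDiffOn ℝ 1 f (Ici 0) ∧
  (∀ ζ : ℝ, 0 ≤ ζ → cγ < γ ζ ∧ γ ζ < Cγ) ∧
  (∀ ζ : ℝ, 0 ≤ ζ → deriv (deriv γ) ζ ≤ 0) ∧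
  f 0 = 0 ∧
  (∀ ζ : ℝ, 0 ≤ ζ → |deriv f ζ| ≤ Cf) ∧
  (∀ ζ : ℝ, 0 ≤ ζ → |f ζ| ≤ Cf * (ζ + 1) ^ α)

/-- `(u,Θ)` is a classical solution of the system (⋆) on `(l,r) × (0,Tmax)` with `Θ ≥ 0`,
homogeneous Neumann boundary conditions `u_x = Θ_x = 0` on `∂Ω`, and
`u, u_t, Θ ∈ C^{2,1}(Ω̄ × (0,Tmax))`. -/
def IsClassicalSolution' (l r D : ℝ) (γ f : ℝ → ℝ) (a : ℝ → ℝ → ℝ)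
    (u Θ : ℝ → ℝ → ℝ) (Tmax : ℝ≥0∞) : Prop :=
  (∀ x ∈ Ioo l r, ∀ t ∈ TJ Tmax,
      pdt (pdt u) x t =
          pdx (fun y s => γ (Θ y s) * pdx (pdt u) y s) x t
        + pdx (fun y s => a y s * pdx u y s) x t
        + pdx (fun y s => f (Θ y s)) x t ∧
      pdt Θ x t = D * pdx (pdx Θ) x t + γ (Θ x t) * (pdx (pdt u) x t) ^ 2
        + f (Θ x t) * pdx (pdt u) x t) ∧
  (∀ t ∈ TJ Tmax, pdx u l t = 0 ∧ pdx u r t = 0 ∧ pdx Θ l t = 0 ∧ pdx Θ r t = 0) ∧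
  (∀ x ∈ Icc l r, ∀ t ∈ TJ Tmax, 0 ≤ Θ x t) ∧
  C21On u (Icc l r) (TJ Tmax) ∧
  C21On (pdt u) (Icc l r) (TJ Tmax) ∧
  C21On Θ (Icc l r) (TJ Tmax)

private lemma myIntegrableOn {l r : ℝ} {q : ℝ → ℝ} (h : ContinuousOn q (Icc l r)) :
    IntegrableOn q (Ioo l r) volume :=
  (h.integrableOn_Icc).mono_set Ioo_subset_Icc_self

private lemma contOn_param_integral {l r : ℝ} {K : Set (ℝ × ℝ)} (hK : IsCompact K)
    {F : (ℝ × ℝ) → ℝ → ℝ}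
    (hF : ContinuousOn (fun q : (ℝ × ℝ) × ℝ => F q.1 q.2) (K ×ˢ Icc l r)) :
    ContinuousOn (fun p => ∫ x in Ioo l r, F p x) K := by
  obtain ⟨M, hM⟩ := (hK.prod isCompact_Icc).exists_bound_of_continuousOn hF
  apply MeasureTheory.continuousOn_of_dominated (bound := fun _ => M)
  · intro p hp
    have h1 : ContinuousOn (fun x => F p x) (Ioo l r) :=
      hF.comp (Continuous.continuousOn (continuous_const.prodMk continuous_id))
        (fun x hx => mem_prod.2 ⟨hp, Ioo_subset_Icc_self hx⟩)
    exact h1.aestronglyMeasurable measurableSet_Ioo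
  · intro p hp
    exact (ae_restrict_iff' measurableSet_Ioo).2 (Filter.Eventually.of_forall
      (fun x hx => hM (p, x) (mem_prod.2 ⟨hp, Ioo_subset_Icc_self hx⟩)))
  · exact integrableOn_const measure_Ioo_lt_top.ne
  · exact (ae_restrict_iff' measurableSet_Ioo).2 (Filter.Eventually.of_forall
      (fun x hx => hF.comp (Continuous.continuousOn (continuous_id.prodMk continuous_const))
        (fun p hp => mem_prod.2 ⟨hp, Ioo_subset_Icc_self hx⟩)))

set_option maxHeartbeats 1000000 in
private lemma pointwise_young {D Cγ Cf αr w p θ gv fv : ℝ} (hD : 0 < D)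
    (hg0 : 0 ≤ gv) (hgC : gv ≤ Cγ) (hCf : 0 ≤ Cf) (hθ : 0 ≤ θ)
    (hf : |fv| ≤ Cf * (θ + 1) ^ αr) :
    (1/2) * (-((D * w + (gv * p^2 + fv * p)) * (w + w))) + (D/2) * w^2
      ≤ ((Cγ^2 * D + 1) / D^2) * p^4 + Cf^4 * (θ + 1) ^ (4 * αr) := by
  have hθ1 : (0:ℝ) ≤ θ + 1 := by linarith
  obtain ⟨Z, hZdef⟩ : ∃ Z : ℝ, Z = (θ + 1) ^ αr := ⟨_, rfl⟩
  obtain ⟨X, hXdef⟩ : ∃ X : ℝ, X = (θ + 1) ^ (4 * αr) := ⟨_, rfl⟩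
  rw [← hXdef]
  rw [← hZdef] at hf
  have hX4 : Z ^ (4:ℕ) = X := by
    rw [hXdef, hZdef, ← Real.rpow_natCast ((θ + 1) ^ αr) 4, ← Real.rpow_mul hθ1]
    norm_num [mul_comm]
  have hX0 : 0 ≤ X := by rw [hXdef]; positivity
  have hfv4 : fv^4 ≤ Cf^4 * X := by
    have h2 : fv^2 ≤ (Cf * Z)^2 := by
      have := pow_le_pow_left₀ (abs_nonneg fv) hf 2
      simpa [sq_abs] using this
    have h4 : (fv^2)^2 ≤ ((Cf * Z)^2)^2 := pow_le_pow_left₀ (sq_nonneg fv) h2 2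
    calc fv^4 = (fv^2)^2 := by ring
      _ ≤ ((Cf * Z)^2)^2 := h4
      _ = Cf^4 * Z^(4:ℕ) := by ring
      _ = Cf^4 * X := by rw [hX4]
  have hD2 : (0:ℝ) < 2 * D^2 := by positivity
  rw [← mul_le_mul_iff_right₀ hD2]
  have hr : 2*D^2 * (((Cγ^2*D+1)/D^2) * p^4 + Cf^4 * X) =
      2*(Cγ^2*D+1)*p^4 + 2*D^2*(Cf^4*X) := by
    field_simp
  rw [hr]
  have hp4 : (0:ℝ) ≤ p^4 := by positivity
  have h1 : 0 ≤ D * ((gv * p^2 + fv * p) + D*w)^2 := mul_nonneg hD.le (sq_nonneg _)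
  have h2 : 0 ≤ D * (gv*p^2 - fv*p)^2 := mul_nonneg hD.le (sq_nonneg _)
  have h3 : 0 ≤ (p^2 - (D/2)*fv^2)^2 := sq_nonneg _
  have hA : 2*D^2*((1/2)*(-((D*w + (gv*p^2+fv*p))*(w+w))) + (D/2)*w^2)
      ≤ D*(gv*p^2+fv*p)^2 := by nlinarith [h1]
  have hB : D*(gv*p^2+fv*p)^2 ≤ 2*D*(gv^2*p^4) + 2*D*(fv^2*p^2) := by nlinarith [h2]
  have hC : 2*D*(fv^2*p^2) ≤ 2*p^4 + (D^2/2)*fv^4 := by nlinarith [h3]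
  have hsq : gv^2 ≤ Cγ^2 := pow_le_pow_left₀ hg0 hgC 2
  have hgv : 2*D*(gv^2*p^4) ≤ 2*D*(Cγ^2*p^4) :=
    mul_le_mul_of_nonneg_left (mul_le_mul_of_nonneg_right hsq hp4) (by positivity)
  have h5a : (D^2/2)*fv^4 ≤ (D^2/2)*(Cf^4*X) :=
    mul_le_mul_of_nonneg_left hfv4 (by positivity)
  have h5b : (D^2/2)*(Cf^4*X) ≤ 2*D^2*(Cf^4*X) := by
    nlinarith [mul_nonneg (pow_nonneg hCf 4) hX0, sq_nonneg D]
  nlinarith [hA, hB, hC, hgv, h5a, h5b]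

set_option maxHeartbeats 2000000 in
/-- **Differential inequality for `∫_Ω Θ_x²`.** For a classical solution `(u,Θ)` of (⋆),
with `c₃ := (C_γ²D + 1)/D²` and `c₄ := C_f⁴`, one has
`½ d/dt ∫_Ω Θ_x² + (D/2) ∫_Ω Θ_xx² ≤ c₃ ∫_Ω u_{tx}⁴ + c₄ ∫_Ω (Θ+1)^{4α}`
for all `t ∈ (0,T_max)`, where `Θ` is sufficiently regular that `∫_Ω Θ_x²` is
differentiable in time and the second equation may be differentiated in `x`. -/
theorem gradient_differential_inequality
    (l r D : ℝ) (hlr : l < r) (hD : 0 < D)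
    (cγ Cγ Cf α : ℝ) (γ f : ℝ → ℝ) (a : ℝ → ℝ → ℝ)
    (hstruct : StructHyp l r cγ Cγ Cf α γ f a)
    (Tmax : ℝ≥0∞) (hTmax : 0 < Tmax) (u Θ : ℝ → ℝ → ℝ)
    (hsol : IsClassicalSolution' l r D γ f a u Θ Tmax)
    -- `∫_Ω Θ_x²` is differentiable in time
    (hEdiff : ∀ t ∈ TJ Tmax,
      DifferentiableAt ℝ (fun s => ∫ x in Ioo l r, (pdx Θ x s) ^ 2) t)
    -- the second equation of (⋆) may be differentiated in `x`
    (hxdiff : ∀ x ∈ Ioo l r, ∀ t ∈ TJ Tmax,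
      DifferentiableAt ℝ (fun y => pdt Θ y t) x ∧
      DifferentiableAt ℝ (fun y => pdx (pdx Θ) y t) x ∧
      pdt (pdx Θ) x t = pdx (pdt Θ) x t) :
    ∀ t ∈ TJ Tmax,
      (1 / 2) * deriv (fun s => ∫ x in Ioo l r, (pdx Θ x s) ^ 2) t
        + (D / 2) * (∫ x in Ioo l r, (pdx (pdx Θ) x t) ^ 2)
      ≤ ((Cγ ^ 2 * D + 1) / D ^ 2) * (∫ x in Ioo l r, (pdx (pdt u) x t) ^ 4)
        + Cf ^ 4 * ∫ x in Ioo l r, (Θ x t + 1) ^ (4 * α) := by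
  obtain ⟨h1, h2, h3, h4, h5, h6, h7, h8, h9, h10, h11, h12, h13, h14, h15⟩ := hstruct
  obtain ⟨hPDE, hBC, hΘ0, hu21, hut21, hΘ21⟩ := hsol
  obtain ⟨hdiffs, hcΘ, hcV, hcW, hcΘt⟩ := hΘ21
  have hcP : ContinuousOn (fun p : ℝ × ℝ => pdx (pdt u) p.1 p.2) (Icc l r ×ˢ TJ Tmax) :=
    hut21.2.2.1
  have hmapsΘ : MapsTo (fun p : ℝ × ℝ => Θ p.1 p.2) (Icc l r ×ˢ TJ Tmax) (Ici 0) :=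
    fun p hp => hΘ0 p.1 hp.1 p.2 hp.2
  have hcG : ContinuousOn
      (fun p : ℝ × ℝ => γ (Θ p.1 p.2) * (pdx (pdt u) p.1 p.2)^2
        + f (Θ p.1 p.2) * pdx (pdt u) p.1 p.2) (Icc l r ×ˢ TJ Tmax) :=
    (((h9.continuousOn).comp hcΘ hmapsΘ).mul (hcP.pow 2)).add
      (((h10.continuousOn).comp hcΘ hmapsΘ).mul hcP)
  have hTJopen : IsOpen (TJ Tmax) := by
    have he : TJ Tmax = Ioi 0 ∩ ENNReal.ofReal ⁻¹' (Iio Tmax) := rfl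
    rw [he]
    exact isOpen_Ioi.inter (isOpen_Iio.preimage ENNReal.continuous_ofReal)
  have hTJord : ∀ a b : ℝ, a ∈ TJ Tmax → b ∈ TJ Tmax → uIcc a b ⊆ TJ Tmax := by
    intro a b ha hb s hs
    rw [uIcc, mem_Icc] at hs
    refine ⟨lt_of_lt_of_le (lt_min ha.1 hb.1) hs.1,
      lt_of_le_of_lt (ENNReal.ofReal_le_ofReal hs.2) ?_⟩
    rcases le_total a b with h | h
    · rw [sup_eq_right.2 h]; exact hb.2
    · rw [sup_eq_left.2 h]; exact ha.2
  have sliceX : ∀ w : ℝ × ℝ → ℝ, ContinuousOn w (Icc l r ×ˢ TJ Tmax) → ∀ s ∈ TJ Tmax,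
      ContinuousOn (fun x => w (x, s)) (Icc l r) := by
    intro w hw s hs
    exact hw.comp (Continuous.continuousOn (continuous_id.prodMk continuous_const))
      (fun x hx => mem_prod.2 ⟨hx, hs⟩)
  intro t ht
  -- the function Φ
  set Φ : ℝ × ℝ → ℝ := fun q => ∫ x in Ioo l r,
      -((D * pdx (pdx Θ) x q.1
          + (γ (Θ x q.1) * (pdx (pdt u) x q.1)^2 + f (Θ x q.1) * pdx (pdt u) x q.1))
        * (pdx (pdx Θ) x q.2 + pdx (pdx Θ) x t)) with hΦdef
  -- continuity of Φ on compact subsets of TJ ×ˢ TJ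
  have hΦcont : ∀ K : Set (ℝ × ℝ), IsCompact K → K ⊆ TJ Tmax ×ˢ TJ Tmax →
      ContinuousOn Φ K := by
    intro K hK hKsub
    apply contOn_param_integral hK
    have hmem1 : ∀ z : (ℝ × ℝ) × ℝ, z ∈ K ×ˢ Icc l r → (z.2, z.1.1) ∈ Icc l r ×ˢ TJ Tmax :=
      fun z hz => mem_prod.2 ⟨hz.2, (mem_prod.1 (hKsub hz.1)).1⟩
    have hmem2 : ∀ z : (ℝ × ℝ) × ℝ, z ∈ K ×ˢ Icc l r → (z.2, z.1.2) ∈ Icc l r ×ˢ TJ Tmax :=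
      fun z hz => mem_prod.2 ⟨hz.2, (mem_prod.1 (hKsub hz.1)).2⟩
    have hmem3 : ∀ z : (ℝ × ℝ) × ℝ, z ∈ K ×ˢ Icc l r → (z.2, t) ∈ Icc l r ×ˢ TJ Tmax :=
      fun z hz => mem_prod.2 ⟨hz.2, ht⟩
    have c1 : Continuous (fun z : (ℝ × ℝ) × ℝ => (z.2, z.1.1)) :=
      continuous_snd.prodMk (continuous_fst.fst)
    have c2 : Continuous (fun z : (ℝ × ℝ) × ℝ => (z.2, z.1.2)) :=
      continuous_snd.prodMk (continuous_fst.snd)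
    have c3 : Continuous (fun z : (ℝ × ℝ) × ℝ => (z.2, t)) :=
      continuous_snd.prodMk continuous_const
    have m1 := hcW.comp c1.continuousOn hmem1
    have mG := hcG.comp c1.continuousOn hmem1
    have m2 := hcW.comp c2.continuousOn hmem2
    have m3 := hcW.comp c3.continuousOn hmem3
    exact (((continuousOn_const.mul m1).add mG).mul (m2.add m3)).neg
  -- Representation: E y - E t = ∫_t^y Φ(s,y) ds
  have repA : ∀ y ∈ TJ Tmax,
      (∫ x in Ioo l r, (pdx Θ x y) ^ 2) - (∫ x in Ioo l r, (pdx Θ x t) ^ 2)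
        = ∫ s in t..y, Φ (s, y) := by
    intro y hy
    set φ : ℝ → ℝ := fun x => pdx Θ x y + pdx Θ x t with hφdef
    set φd : ℝ → ℝ := fun x => pdx (pdx Θ) x y + pdx (pdx Θ) x t with hφddef
    have hφl : φ l = 0 := by
      rw [hφdef]; simp only; rw [(hBC y hy).2.2.1, (hBC t ht).2.2.1]; ring
    have hφr : φ r = 0 := by
      rw [hφdef]; simp only; rw [(hBC y hy).2.2.2, (hBC t ht).2.2.2]; ring
    have hφcont : ContinuousOn φ (Icc l r) :=
      (sliceX _ hcV y hy).add (sliceX _ hcV t ht)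
    have hφdcont : ContinuousOn φd (Icc l r) :=
      (sliceX _ hcW y hy).add (sliceX _ hcW t ht)
    have hφderiv : ∀ x ∈ Icc l r, HasDerivAt φ (φd x) x := by
      intro x hx
      exact ((hdiffs x hx y hy).2.1.hasDerivAt).add ((hdiffs x hx t ht).2.1.hasDerivAt)
    -- integration by parts at fixed time s
    have hIBP : ∀ s ∈ TJ Tmax,
        ∫ x in Ioo l r, pdx Θ x s * φ x = -∫ x in Ioo l r, Θ x s * φd x := by
      intro s hs
      have hVs := sliceX _ hcV s hs
      have hΘs := sliceX _ hcΘ s hs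
      have hic : ContinuousOn (fun x => pdx Θ x s * φ x + Θ x s * φd x) (Icc l r) :=
        (hVs.mul hφcont).add (hΘs.mul hφdcont)
      have hFTC := intervalIntegral.integral_eq_sub_of_hasDeriv_right_of_le
        (f := fun x => Θ x s * φ x)
        (f' := fun x => pdx Θ x s * φ x + Θ x s * φd x) hlr.le
        (hΘs.mul hφcont)
        (fun x hx => (((hdiffs x (Ioo_subset_Icc_self hx) s hs).1.hasDerivAt.mul
          (hφderiv x (Ioo_subset_Icc_self hx)))).hasDerivWithinAt)
        ((show ContinuousOn (fun x => pdx Θ x s * φ x + Θ x s * φd x) (uIcc l r) by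
          rw [uIcc_of_le hlr.le]; exact hic).intervalIntegrable)
      simp only [hφl, hφr, mul_zero, sub_zero] at hFTC
      have hconv : ∫ x in l..r, (pdx Θ x s * φ x + Θ x s * φd x)
          = ∫ x in Ioo l r, (pdx Θ x s * φ x + Θ x s * φd x) := by
        rw [intervalIntegral.integral_of_le hlr.le, integral_Ioc_eq_integral_Ioo]
      have hi1 : IntegrableOn (fun x => pdx Θ x s * φ x) (Ioo l r) volume :=
        myIntegrableOn (hVs.mul hφcont)
      have hi2 : IntegrableOn (fun x => Θ x s * φd x) (Ioo l r) volume :=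
        myIntegrableOn (hΘs.mul hφdcont)
      have hsplit : ∫ x in Ioo l r, (pdx Θ x s * φ x + Θ x s * φd x)
          = (∫ x in Ioo l r, pdx Θ x s * φ x) + ∫ x in Ioo l r, Θ x s * φd x :=
        integral_add hi1 hi2
      rw [hconv, hsplit] at hFTC
      linarith
    -- the time-derivative of m
    have hm : ∀ s ∈ TJ Tmax,
        HasDerivAt (fun σ => -∫ x in Ioo l r, Θ x σ * φd x) (Φ (s, y)) s := by
      intro s hs
      obtain ⟨ε, hεpos, hεsub⟩ := Metric.isOpen_iff.1 hTJopen s hs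
      have hIccsub : Icc (s - ε/2) (s + ε/2) ⊆ TJ Tmax := by
        intro σ hσ
        apply hεsub
        rw [Metric.mem_ball, Real.dist_eq]
        have : |σ - s| ≤ ε/2 := abs_le.2 ⟨by linarith [hσ.1], by linarith [hσ.2]⟩
        linarith
      have hballsub : Metric.ball s (ε/2) ⊆ Icc (s - ε/2) (s + ε/2) := by
        intro σ hσ
        rw [Metric.mem_ball, Real.dist_eq] at hσ
        have := abs_le.1 hσ.le
        exact ⟨by linarith [this.1], by linarith [this.2]⟩
      -- bound on a compact neighborhood
      have hKc : IsCompact (Icc l r ×ˢ Icc (s - ε/2) (s + ε/2)) :=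
        isCompact_Icc.prod isCompact_Icc
      have hKsub : Icc l r ×ˢ Icc (s - ε/2) (s + ε/2) ⊆ Icc l r ×ˢ TJ Tmax :=
        prod_mono subset_rfl hIccsub
      have hcb : ContinuousOn (fun p : ℝ × ℝ => pdt Θ p.1 p.2 * φd p.1)
          (Icc l r ×ˢ Icc (s - ε/2) (s + ε/2)) :=
        (hcΘt.mono hKsub).mul (hφdcont.comp continuous_fst.continuousOn
          (fun p hp => (mem_prod.1 hp).1))
      obtain ⟨M, hM⟩ := hKc.exists_bound_of_continuousOn hcb
      have key := hasDerivAt_integral_of_dominated_loc_of_deriv_le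
        (F := fun σ x => Θ x σ * φd x) (F' := fun σ x => pdt Θ x σ * φd x)
        (μ := volume.restrict (Ioo l r)) (x₀ := s) (bound := fun _ => M)
        (Metric.ball_mem_nhds s (half_pos hεpos))
        ?_ ?_ ?_ ?_ ?_ ?_
      · have hkey := key.2.neg
        have : -∫ x in Ioo l r, pdt Θ x s * φd x = Φ (s, y) := by
          rw [hΦdef]
          simp only
          rw [← integral_neg]
          apply setIntegral_congr_fun measurableSet_Ioo
          intro x hx
          simp only
          rw [(hPDE x hx s hs).2, hφddef]
          ring
        rwa [this] at hkey
      · filter_upwards [hTJopen.mem_nhds hs] with σ hσ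
        exact (((sliceX _ hcΘ σ hσ).mul hφdcont).mono Ioo_subset_Icc_self).aestronglyMeasurable
          measurableSet_Ioo
      · exact myIntegrableOn ((sliceX _ hcΘ s hs).mul hφdcont)
      · exact (((sliceX _ hcΘt s hs).mul hφdcont).mono Ioo_subset_Icc_self).aestronglyMeasurable
          measurableSet_Ioo
      · refine (ae_restrict_iff' measurableSet_Ioo).2 (Filter.Eventually.of_forall ?_)
        intro x hx σ hσ
        exact hM (x, σ) (mem_prod.2 ⟨Ioo_subset_Icc_self hx, hballsub hσ⟩)
      · exact integrableOn_const measure_Ioo_lt_top.ne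
      · refine (ae_restrict_iff' measurableSet_Ioo).2 (Filter.Eventually.of_forall ?_)
        intro x hx σ hσ
        exact ((hdiffs x (Ioo_subset_Icc_self hx) σ (hIccsub (hballsub hσ))).2.2.hasDerivAt).mul_const
          (φd x)
    -- continuity of s ↦ Φ (s, y) on uIcc t y
    have huIsub : uIcc t y ⊆ TJ Tmax := hTJord t y ht hy
    have hΦycont : ContinuousOn (fun s => Φ (s, y)) (uIcc t y) := by
      have hK := hΦcont (uIcc t y ×ˢ uIcc t y)
        (isCompact_uIcc.prod isCompact_uIcc) (prod_mono huIsub huIsub)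
      exact hK.comp (Continuous.continuousOn (continuous_id.prodMk continuous_const))
        (fun s hs => mem_prod.2 ⟨hs, right_mem_uIcc⟩)
    have hFTCs := intervalIntegral.integral_eq_sub_of_hasDerivAt
      (f := fun σ => -∫ x in Ioo l r, Θ x σ * φd x)
      (f' := fun s => Φ (s, y)) (a := t) (b := y)
      (fun s hs => hm s (huIsub hs)) (hΦycont.intervalIntegrable)
    have hFTCs' : ∫ s in t..y, Φ (s, y)
        = (-∫ x in Ioo l r, Θ x y * φd x) - -∫ x in Ioo l r, Θ x t * φd x := hFTCs
    have hmy := hIBP y hy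
    have hmt := hIBP t ht
    have hiVy : IntegrableOn (fun x => (pdx Θ x y)^2) (Ioo l r) volume :=
      myIntegrableOn ((sliceX _ hcV y hy).pow 2)
    have hiVt : IntegrableOn (fun x => (pdx Θ x t)^2) (Ioo l r) volume :=
      myIntegrableOn ((sliceX _ hcV t ht).pow 2)
    have hiVyt : IntegrableOn (fun x => pdx Θ x y * pdx Θ x t) (Ioo l r) volume :=
      myIntegrableOn ((sliceX _ hcV y hy).mul (sliceX _ hcV t ht))
    have hEy : ∫ x in Ioo l r, pdx Θ x y * φ x
        = (∫ x in Ioo l r, (pdx Θ x y)^2) + ∫ x in Ioo l r, pdx Θ x y * pdx Θ x t := by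
      rw [← integral_add hiVy hiVyt]
      apply setIntegral_congr_fun measurableSet_Ioo
      intro x hx
      simp only [hφdef]
      ring
    have hEt : ∫ x in Ioo l r, pdx Θ x t * φ x
        = (∫ x in Ioo l r, pdx Θ x y * pdx Θ x t) + ∫ x in Ioo l r, (pdx Θ x t)^2 := by
      rw [← integral_add hiVyt hiVt]
      apply setIntegral_congr_fun measurableSet_Ioo
      intro x hx
      simp only [hφdef]
      ring
    linarith [hEy, hEt, hmy, hmt, hFTCs']
  -- Claim B : E has derivative Φ(t,t) at t
  obtain ⟨δ₀, hδ₀, hJsub⟩ : ∃ δ₀ > 0, Icc (t - δ₀) (t + δ₀) ⊆ TJ Tmax := by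
    obtain ⟨ε, hε, hball⟩ := Metric.isOpen_iff.1 hTJopen t ht
    refine ⟨ε/2, half_pos hε, fun s hs => hball ?_⟩
    rw [Metric.mem_ball, Real.dist_eq]
    have : |s - t| ≤ ε/2 := abs_le.2 ⟨by linarith [hs.1], by linarith [hs.2]⟩
    linarith
  have htJ : t ∈ Icc (t - δ₀) (t + δ₀) := ⟨by linarith, by linarith⟩
  have hΦJ : ContinuousOn Φ (Icc (t - δ₀) (t + δ₀) ×ˢ Icc (t - δ₀) (t + δ₀)) :=
    hΦcont _ (isCompact_Icc.prod isCompact_Icc) (prod_mono hJsub hJsub)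
  have hCWt : ContinuousWithinAt Φ (Icc (t - δ₀) (t + δ₀) ×ˢ Icc (t - δ₀) (t + δ₀)) (t, t) :=
    hΦJ _ (mem_prod.2 ⟨htJ, htJ⟩)
  have hBder : HasDerivAt (fun s => ∫ x in Ioo l r, (pdx Θ x s)^2) (Φ (t, t)) t := by
    rw [hasDerivAt_iff_tendsto_slope]
    rw [Metric.tendsto_nhds]
    intro ε hε
    obtain ⟨δ, hδpos, hδprop⟩ := Metric.continuousWithinAt_iff.1 hCWt (ε/2) (half_pos hε)
    have hball : Metric.ball t (min δ δ₀) ∈ nhdsWithin t {y : ℝ | y ≠ t} :=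
      nhdsWithin_le_nhds (Metric.ball_mem_nhds t (lt_min hδpos hδ₀))
    have hne : {y : ℝ | y ≠ t} ∈ nhdsWithin t {y : ℝ | y ≠ t} := self_mem_nhdsWithin
    filter_upwards [hball, hne] with y hy hyne
    rw [Metric.mem_ball, Real.dist_eq] at hy
    have hyJ : y ∈ Icc (t - δ₀) (t + δ₀) := by
      have := abs_le.1 (le_of_lt (lt_of_lt_of_le hy (min_le_right _ _)))
      exact ⟨by linarith [this.1], by linarith [this.2]⟩
    have hyTJ : y ∈ TJ Tmax := hJsub hyJ
    have hrep := repA y hyTJ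
    have hsub2 : uIcc t y ⊆ Icc (t - δ₀) (t + δ₀) := by
      intro s hs
      rw [uIcc, mem_Icc] at hs
      have h1' := abs_le.1 (le_of_lt (lt_of_lt_of_le hy (min_le_right _ _)))
      constructor
      · calc t - δ₀ ≤ min t y := le_min (by linarith) (by linarith [h1'.1])
          _ ≤ s := hs.1
      · calc s ≤ max t y := hs.2
          _ ≤ t + δ₀ := max_le (by linarith) (by linarith [h1'.2])
    have hbound : ∀ s ∈ Set.uIoc t y, ‖Φ (s, y) - Φ (t, t)‖ ≤ ε/2 := by
      intro s hs
      have hs' : s ∈ uIcc t y := uIoc_subset_uIcc hs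
      have hsJ : s ∈ Icc (t - δ₀) (t + δ₀) := hsub2 hs'
      have hst : |s - t| ≤ |y - t| := by
        rw [uIcc, mem_Icc] at hs'
        rcases le_total t y with h | h
        · rw [min_eq_left h, max_eq_right h] at hs'
          rw [abs_of_nonneg (by linarith [hs'.1]), abs_of_nonneg (by linarith)]
          linarith [hs'.2]
        · rw [min_eq_right h, max_eq_left h] at hs'
          rw [abs_of_nonpos (by linarith [hs'.2]), abs_of_nonpos (by linarith)]
          linarith [hs'.1]
      have hdq : dist (s, y) (t, t) < δ := by
        rw [Prod.dist_eq]
        apply max_lt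
        · rw [Real.dist_eq]
          exact lt_of_le_of_lt hst (lt_of_lt_of_le hy (min_le_left _ _))
        · rw [Real.dist_eq]
          exact lt_of_lt_of_le hy (min_le_left _ _)
      have hd := hδprop (mem_prod.2 ⟨hsJ, hyJ⟩) hdq
      rw [Real.dist_eq] at hd
      rw [Real.norm_eq_abs]
      exact hd.le
    have hyne' : y - t ≠ 0 := sub_ne_zero.2 hyne
    have hΦyI : IntervalIntegrable (fun s => Φ (s, y)) volume t y := by
      apply ContinuousOn.intervalIntegrable
      have hK := hΦcont (uIcc t y ×ˢ uIcc t y) (isCompact_uIcc.prod isCompact_uIcc)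
        (prod_mono (hTJord t y ht hyTJ) (hTJord t y ht hyTJ))
      exact hK.comp (Continuous.continuousOn (continuous_id.prodMk continuous_const))
        (fun s hs => mem_prod.2 ⟨hs, right_mem_uIcc⟩)
    have hint : ∫ s in t..y, (Φ (s, y) - Φ (t, t))
        = ((∫ x in Ioo l r, (pdx Θ x y)^2) - ∫ x in Ioo l r, (pdx Θ x t)^2)
          - (y - t) * Φ (t, t) := by
      rw [intervalIntegral.integral_sub hΦyI intervalIntegrable_const,
        intervalIntegral.integral_const, hrep, smul_eq_mul]
    have hnorm : ‖∫ s in t..y, (Φ (s, y) - Φ (t, t))‖ ≤ ε/2 * |y - t| :=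
      intervalIntegral.norm_integral_le_of_norm_le_const hbound
    rw [hint, Real.norm_eq_abs] at hnorm
    have habs : |y - t| > 0 := abs_pos.2 hyne'
    have hfin : dist (slope (fun s => ∫ x in Ioo l r, (pdx Θ x s)^2) t y) (Φ (t, t)) ≤ ε/2 := by
      rw [slope_def_field, Real.dist_eq]
      show |((∫ x in Ioo l r, (pdx Θ x y)^2) - ∫ x in Ioo l r, (pdx Θ x t)^2) / (y - t)
        - Φ (t, t)| ≤ ε / 2
      have hq : ((∫ x in Ioo l r, (pdx Θ x y)^2) - ∫ x in Ioo l r, (pdx Θ x t)^2) / (y - t)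
            - Φ (t, t)
          = (((∫ x in Ioo l r, (pdx Θ x y)^2) - ∫ x in Ioo l r, (pdx Θ x t)^2)
              - (y - t) * Φ (t, t)) / (y - t) := by
        field_simp
      rw [hq, abs_div, div_le_iff₀ habs]
      exact hnorm
    exact lt_of_le_of_lt hfin (by linarith)
  -- Claim C : final estimate
  have hderiv : deriv (fun s => ∫ x in Ioo l r, (pdx Θ x s)^2) t = Φ (t, t) := hBder.deriv
  rw [hderiv]
  have hiW2 : IntegrableOn (fun x => (pdx (pdx Θ) x t)^2) (Ioo l r) volume :=
    myIntegrableOn ((sliceX _ hcW t ht).pow 2)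
  have hiP4 : IntegrableOn (fun x => (pdx (pdt u) x t)^4) (Ioo l r) volume :=
    myIntegrableOn ((sliceX _ hcP t ht).pow 4)
  have hiX : IntegrableOn (fun x => (Θ x t + 1) ^ (4 * α)) (Ioo l r) volume := by
    apply myIntegrableOn
    exact ((sliceX _ hcΘ t ht).add continuousOn_const).rpow_const
      (fun x hx => Or.inr (by positivity))
  have hiΦ : IntegrableOn (fun x =>
      -((D * pdx (pdx Θ) x t
          + (γ (Θ x t) * (pdx (pdt u) x t)^2 + f (Θ x t) * pdx (pdt u) x t))
        * (pdx (pdx Θ) x t + pdx (pdx Θ) x t))) (Ioo l r) volume := by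
    apply myIntegrableOn
    exact (((continuousOn_const.mul (sliceX _ hcW t ht)).add (sliceX _ hcG t ht)).mul
      ((sliceX _ hcW t ht).add (sliceX _ hcW t ht))).neg
  have hΦtt : Φ (t, t) = ∫ x in Ioo l r,
      -((D * pdx (pdx Θ) x t
          + (γ (Θ x t) * (pdx (pdt u) x t)^2 + f (Θ x t) * pdx (pdt u) x t))
        * (pdx (pdx Θ) x t + pdx (pdx Θ) x t)) := rfl
  have hL : (1/2) * Φ (t, t) + (D/2) * (∫ x in Ioo l r, (pdx (pdx Θ) x t)^2)
      = ∫ x in Ioo l r,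
        ((1/2) * (-((D * pdx (pdx Θ) x t
            + (γ (Θ x t) * (pdx (pdt u) x t)^2 + f (Θ x t) * pdx (pdt u) x t))
          * (pdx (pdx Θ) x t + pdx (pdx Θ) x t)))
          + (D/2) * (pdx (pdx Θ) x t)^2) := by
    rw [hΦtt, ← integral_const_mul, ← integral_const_mul,
      ← integral_add (hiΦ.const_mul _) (hiW2.const_mul _)]
  have hR : ((Cγ ^ 2 * D + 1) / D ^ 2) * (∫ x in Ioo l r, (pdx (pdt u) x t)^4)
        + Cf ^ 4 * (∫ x in Ioo l r, (Θ x t + 1) ^ (4 * α))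
      = ∫ x in Ioo l r,
        (((Cγ ^ 2 * D + 1) / D ^ 2) * (pdx (pdt u) x t)^4
          + Cf ^ 4 * (Θ x t + 1) ^ (4 * α)) := by
    rw [← integral_const_mul, ← integral_const_mul,
      ← integral_add (hiP4.const_mul _) (hiX.const_mul _)]
  rw [hL, hR]
  apply setIntegral_mono_on ((hiΦ.const_mul _).add (hiW2.const_mul _))
    ((hiP4.const_mul _).add (hiX.const_mul _)) measurableSet_Ioo
  intro x hx
  have hθx : 0 ≤ Θ x t := hΘ0 x (Ioo_subset_Icc_self hx) t ht
  have hγx := h11 (Θ x t) hθx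
  exact pointwise_young hD (le_of_lt (lt_trans h1 hγx.1)) hγx.2.le (by linarith) hθx
    (h15 (Θ x t) hθx)
end
end
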